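/- Let m ≥ 1 and δ_c ∈ ℂ. The complex matrix obtained from Γ²_{2m} by evaluating δ at δ_c is invertible if and only if δ_c ∉ {0, 1, …, m−1}. -/
import Mathlib


/- Set partitions of a finite set are modelled as equivalence relations, i.e. `Setoid`.
   `nBlocks` is the number of blocks (equivalence classes), `p ⊔ q` is the join,
   `IsEvenPartition` says every block has even cardinality, `T m t` counts even set
   partitions of a `2*m`-element set into exactly `t` blocks, and `Gram2 m` is the Gram
   matrix of the spine standard module of the 2-tonal partition algebra, over `ℂ[δ]`
   (with `δ = Polynomial.X`). -/

open scoped Classical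

noncomputable section

def nBlocks {X : Type*} (s : Setoid X) : ℕ := Nat.card (Quotient s)

def IsEvenPartition {X : Type*} (s : Setoid X) : Prop :=
  ∀ x : X, Even (Nat.card {y : X // s.r x y})

def T (m t : ℕ) : ℕ :=
  Nat.card {s : Setoid (Fin (2 * m)) // IsEvenPartition s ∧ nBlocks s = t}

instance {X : Type*} [Finite X] : Finite (Setoid X) :=
  Finite.of_injective (fun s : Setoid X => (s.r : X → X → Prop)) fun s t h => by
    cases s; cases t; cases h; rfl

noncomputable instance (m : ℕ) : Fintype {s : Setoid (Fin (2 * m)) // IsEvenPartition s} :=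
  Fintype.ofFinite _

def Gram2 (m : ℕ) :
    Matrix {s : Setoid (Fin (2 * m)) // IsEvenPartition s}
      {s : Setoid (Fin (2 * m)) // IsEvenPartition s} (Polynomial ℂ) :=
  Matrix.of fun p q => (Polynomial.X : Polynomial ℂ) ^ nBlocks (p.1 ⊔ q.1)

/-! ### Auxiliary material -/

section Aux
set_option linter.unusedVariables false

/-- falling factorial -/
def ff (d : ℂ) (b : ℕ) : ℂ := ∏ k ∈ Finset.range b, (d - k)

lemma ff_nat (N b : ℕ) : ff (N : ℂ) b = (N.descFactorial b : ℂ) := by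
  induction b with
  | zero => simp [ff]
  | succ b ih =>
    rw [ff, Finset.prod_range_succ, ← ff, ih, Nat.descFactorial_succ]
    rcases le_or_gt b N with h | h
    · push_cast [Nat.cast_sub h]; ring
    · rw [Nat.descFactorial_eq_zero_iff_lt.2 h]
      simp [Nat.sub_eq_zero_of_le h.le]

lemma ff_ne_zero_iff (d : ℂ) (b : ℕ) : ff d b ≠ 0 ↔ ∀ k : ℕ, k < b → d ≠ (k : ℂ) := by
  rw [ff, Finset.prod_ne_zero_iff]
  constructor
  · intro h k hk
    have := h k (Finset.mem_range.2 hk)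
    intro he; exact this (by rw [he, sub_self])
  · intro h k hk
    rw [sub_ne_zero]
    exact h k (Finset.mem_range.1 hk)

lemma poly_eq_of_nat_eval {p q : Polynomial ℂ}
    (h : ∀ N : ℕ, p.eval (N : ℂ) = q.eval (N : ℂ)) : p = q := by
  rw [← sub_eq_zero]
  apply Polynomial.eq_zero_of_infinite_isRoot
  apply Set.Infinite.mono (s := Set.range ((↑) : ℕ → ℂ))
  · rintro _ ⟨N, rfl⟩
    simp [Polynomial.IsRoot, h N]
  · exact Set.infinite_range_of_injective Nat.cast_injective

/-- functions with given kernel are embeddings of the quotient -/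
def fiberEquivEmbedding {X F : Type*} (u : Setoid X) :
    {f : X → F // Setoid.ker f = u} ≃ (Quotient u ↪ F) where
  toFun f := ⟨Quotient.lift f.1 (fun a b h => by
      have : Setoid.ker f.1 a b := by rw [f.2]; exact h
      exact this), by
    intro a b
    induction a using Quotient.ind
    induction b using Quotient.ind
    intro h
    exact Quotient.sound (by rw [← f.2]; exact h)⟩
  invFun g := ⟨fun x => g ⟦x⟧, by
    ext a b
    constructor
    · intro h
      exact Quotient.exact (g.injective h)
    · intro h
      exact congrArg g (Quotient.sound h)⟩
  left_inv f := by ext x; rfl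
  right_inv g := by ext ⟨x⟩; rfl

lemma stirling_nat (X : Type*) [Fintype X] [Fintype (Setoid X)] (N : ℕ) :
    ∑ u : Setoid X, ((N.descFactorial (nBlocks u)) : ℕ) = N ^ Fintype.card X := by
  have h1 : Fintype.card (X → Fin N) = N ^ Fintype.card X := by simp
  rw [← h1, ← Fintype.card_congr (Equiv.sigmaFiberEquiv (fun f : X → Fin N => Setoid.ker f)),
    Fintype.card_sigma]
  refine Finset.sum_congr rfl fun u _ => ?_
  rw [Fintype.card_congr (fiberEquivEmbedding u), Fintype.card_embedding_eq, Fintype.card_fin,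
    nBlocks, Nat.card_eq_fintype_card]

/-- The key Stirling-type identity: `∑ over set partitions of (δ)_{b(u)} = δ^n`. -/
lemma stirling (X : Type*) [Fintype X] [Fintype (Setoid X)] (d : ℂ) :
    ∑ u : Setoid X, ff d (nBlocks u) = d ^ Fintype.card X := by
  have key : (∑ u : Setoid X, ∏ k ∈ Finset.range (nBlocks u),
      (Polynomial.X - Polynomial.C (k : ℂ))) = Polynomial.X ^ Fintype.card X := by
    apply poly_eq_of_nat_eval
    intro N
    simp only [Polynomial.eval_finset_sum, Polynomial.eval_prod, Polynomial.eval_sub,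
      Polynomial.eval_X, Polynomial.eval_C, Polynomial.eval_pow]
    calc (∑ u : Setoid X, ∏ k ∈ Finset.range (nBlocks u), ((N : ℂ) - k))
        = ∑ u : Setoid X, ((N.descFactorial (nBlocks u) : ℕ) : ℂ) := by
          refine Finset.sum_congr rfl fun u _ => ?_
          rw [← ff_nat]; rfl
      _ = ((N ^ Fintype.card X : ℕ) : ℂ) := by rw [← Nat.cast_sum, stirling_nat]
      _ = (N : ℂ) ^ Fintype.card X := by push_cast; ring
  have := congrArg (Polynomial.eval d) key
  simpa [Polynomial.eval_finset_sum, Polynomial.eval_prod, ff] using this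

/-- map between quotients induced by `s ≤ t` -/
def quotMap {X : Type*} {s t : Setoid X} (h : s ≤ t) : Quotient s → Quotient t :=
  Quotient.lift (Quotient.mk t) (fun _ _ hab => Quotient.sound (h hab))

lemma quotMap_surjective {X : Type*} {s t : Setoid X} (h : s ≤ t) :
    Function.Surjective (quotMap h) := by
  rintro ⟨x⟩; exact ⟨⟦x⟧, rfl⟩

lemma nBlocks_antitone {X : Type*} [Finite X] {s t : Setoid X} (h : s ≤ t) :
    nBlocks t ≤ nBlocks s :=
  Nat.card_le_card_of_surjective _ (quotMap_surjective h)

lemma eq_of_le_of_nBlocks_eq {X : Type*} [Finite X] {s t : Setoid X} (h : s ≤ t)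
    (hc : nBlocks s = nBlocks t) : s = t := by
  haveI : Fintype (Quotient s) := Fintype.ofFinite _
  haveI : Fintype (Quotient t) := Fintype.ofFinite _
  have hb : Function.Bijective (quotMap h) := by
    rw [Fintype.bijective_iff_surjective_and_card]
    exact ⟨quotMap_surjective h, by
      rw [← Nat.card_eq_fintype_card, ← Nat.card_eq_fintype_card]; exact hc⟩
  refine le_antisymm h fun x y hxy => ?_
  have : quotMap h (⟦x⟧ : Quotient s) = quotMap h ⟦y⟧ := by
    show (⟦x⟧ : Quotient t) = ⟦y⟧
    exact Quotient.sound hxy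
  exact Quotient.exact (hb.1 this)

/-- quotient by correspondence setoid is equivalent to quotient by original -/
def quotCorrespondenceEquiv {X : Type*} (r : Setoid X) (t : {s : Setoid X // r ≤ s}) :
    Quotient ((Setoid.correspondence r) t) ≃ Quotient t.1 where
  toFun := Quotient.lift (Quotient.lift (Quotient.mk t.1)
      (fun _ _ hab => Quotient.sound (t.2 hab)))
    (fun a b => by
      induction a using Quotient.ind
      induction b using Quotient.ind
      intro hab
      exact Quotient.sound hab)
  invFun := Quotient.lift (fun x => (⟦⟦x⟧⟧ : Quotient ((Setoid.correspondence r) t)))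
    (fun a b hab => Quotient.sound hab)
  left_inv := by rintro ⟨⟨x⟩⟩; rfl
  right_inv := by rintro ⟨x⟩; rfl

lemma nBlocks_correspondence {X : Type*} (r : Setoid X) (t : {s : Setoid X // r ≤ s}) :
    nBlocks ((Setoid.correspondence r) t) = nBlocks t.1 :=
  Nat.card_congr (quotCorrespondenceEquiv r t)

/-- class of x as fiber of the quotient map -/
def classEquivFiber {X : Type*} (s : Setoid X) (x : X) :
    {y : X // s.r x y} ≃ {y : X // (⟦y⟧ : Quotient s) = ⟦x⟧} where
  toFun y := ⟨y.1, Quotient.sound (s.symm y.2)⟩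
  invFun y := ⟨y.1, s.symm (Quotient.exact y.2)⟩
  left_inv y := rfl
  right_inv y := rfl

lemma card_eq_sum_classes {X : Type*} [Fintype X] (s : Setoid X) [Fintype (Quotient s)] :
    Fintype.card X = ∑ c : Quotient s, Nat.card {y : X // (⟦y⟧ : Quotient s) = c} := by
  rw [← Fintype.card_congr (Equiv.sigmaFiberEquiv (fun y : X => (⟦y⟧ : Quotient s))),
    Fintype.card_sigma]
  refine Finset.sum_congr rfl fun c _ => ?_
  rw [Nat.card_eq_fintype_card]

lemma even_of_le {X : Type*} [Fintype X] {s t : Setoid X} (h : s ≤ t)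
    (hs : IsEvenPartition s) : IsEvenPartition t := by
  intro x
  haveI : Fintype {y : X // t.r x y} := Fintype.ofFinite _
  set Y := {y : X // t.r x y} with hY
  let s' : Setoid Y := s.comap Subtype.val
  haveI : Fintype (Quotient s') := Fintype.ofFinite _
  rw [Nat.card_eq_fintype_card, card_eq_sum_classes s', even_iff_two_dvd]
  apply Finset.dvd_sum
  intro c _
  rw [← even_iff_two_dvd]
  induction c using Quotient.ind with
  | _ y0 =>
    have e1 : {y : Y // (⟦y⟧ : Quotient s') = ⟦y0⟧} ≃ {y : Y // s'.r y0 y} :=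
      (classEquivFiber s' y0).symm
    have e2 : {y : Y // s'.r y0 y} ≃ {z : X // s.r y0.1 z} := {
      toFun := fun y => ⟨y.1.1, y.2⟩
      invFun := fun z => ⟨⟨z.1, t.trans y0.2 (h z.2)⟩, z.2⟩
      left_inv := fun y => rfl
      right_inv := fun z => rfl }
    rw [Nat.card_congr (e1.trans e2)]
    exact hs y0.1

lemma two_mul_nBlocks_le {X : Type*} [Fintype X] {s : Setoid X} (hs : IsEvenPartition s) :
    2 * nBlocks s ≤ Fintype.card X := by
  haveI : Fintype (Quotient s) := Fintype.ofFinite _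
  rw [card_eq_sum_classes s, nBlocks, Nat.card_eq_fintype_card]
  calc 2 * Fintype.card (Quotient s) = ∑ _c : Quotient s, 2 := by
        rw [Finset.sum_const, Finset.card_univ, smul_eq_mul, mul_comm]
    _ ≤ ∑ c : Quotient s, Nat.card {y : X // (⟦y⟧ : Quotient s) = c} := by
        apply Finset.sum_le_sum
        intro c _
        induction c using Quotient.ind with
        | _ x =>
          have he : Even (Nat.card {y : X // (⟦y⟧ : Quotient s) = ⟦x⟧}) := by
            rw [← Nat.card_congr (classEquivFiber s x)]; exact hs x
          have hp : 0 < Nat.card {y : X // (⟦y⟧ : Quotient s) = ⟦x⟧} := by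
            haveI : Nonempty {y : X // (⟦y⟧ : Quotient s) = ⟦x⟧} := ⟨⟨x, rfl⟩⟩
            exact Nat.card_pos
          obtain ⟨k, hk⟩ := he
          omega

def pairFun (m : ℕ) (x : Fin (2 * m)) : Fin m := ⟨x.val / 2, by omega⟩

def pairSetoid (m : ℕ) : Setoid (Fin (2 * m)) := Setoid.ker (pairFun m)

lemma pairFun_surjective (m : ℕ) : Function.Surjective (pairFun m) := by
  intro k
  refine ⟨⟨2 * k.val, by omega⟩, ?_⟩
  ext
  show 2 * k.val / 2 = k.val
  omega

lemma nBlocks_pairSetoid (m : ℕ) : nBlocks (pairSetoid m) = m := by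
  rw [nBlocks, pairSetoid,
    Nat.card_congr (Setoid.quotientKerEquivOfSurjective _ (pairFun_surjective m)),
    Nat.card_eq_fintype_card, Fintype.card_fin]

lemma isEven_pairSetoid (m : ℕ) : IsEvenPartition (pairSetoid m) := by
  intro x
  have e : {y : Fin (2 * m) // (pairSetoid m).r x y} ≃ Fin 2 := {
    toFun := fun y => ⟨y.1.val % 2, by omega⟩
    invFun := fun b => ⟨⟨2 * (x.val / 2) + b.val, by omega⟩, by
      have : (⟨2 * (x.val / 2) + b.val, by omega⟩ : Fin (2 * m)).val / 2 = x.val / 2 := by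
        simp only []
        omega
      exact Fin.ext this.symm⟩
    left_inv := fun y => by
      apply Subtype.ext
      apply Fin.ext
      show 2 * (x.val / 2) + y.1.val % 2 = y.1.val
      have : x.val / 2 = y.1.val / 2 := by
        have h2 : pairFun m x = pairFun m y.1 := y.2
        exact congrArg Fin.val h2
      omega
    right_inv := fun b => by
      apply Fin.ext
      show (2 * (x.val / 2) + b.val) % 2 = b.val
      omega }
  rw [Nat.card_congr e, Nat.card_eq_fintype_card, Fintype.card_fin]
  exact even_two

end Aux

/-! ### Main argument -/

section Main
set_option linter.unusedVariables false

variable (m : ℕ)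

local notation "I" => {s : Setoid (Fin (2 * m)) // IsEvenPartition s}

/-- the zeta matrix of the even partition poset -/
def zetaM : Matrix I I ℂ :=
  Matrix.of fun p q => if p.1 ≤ q.1 then (1 : ℂ) else 0

/-- the key summation: sum of falling factorials over even coarsenings of an even
partition `j` is `δ ^ (number of blocks of j)`. -/
lemma sum_ff_coarsenings (δc : ℂ) (j : Setoid (Fin (2 * m))) (hj : IsEvenPartition j) :
    ∑ r : I, (if j ≤ r.1 then ff δc (nBlocks r.1) else 0) = δc ^ nBlocks j := by
  haveI : Fintype {r : I // j ≤ r.1} := Fintype.ofFinite _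
  haveI : Fintype {t : Setoid (Fin (2 * m)) // j ≤ t} := Fintype.ofFinite _
  haveI : Fintype (Quotient j) := Fintype.ofFinite _
  haveI : Fintype (Setoid (Quotient j)) := Fintype.ofFinite _
  let e1 : {r : I // j ≤ r.1} ≃ {t : Setoid (Fin (2 * m)) // j ≤ t} := {
    toFun := fun r => ⟨r.1.1, r.2⟩
    invFun := fun t => ⟨⟨t.1, even_of_le t.2 hj⟩, t.2⟩
    left_inv := fun r => rfl
    right_inv := fun t => rfl }
  let e : {r : I // j ≤ r.1} ≃ Setoid (Quotient j) :=
    e1.trans (Setoid.correspondence j).toEquiv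
  calc ∑ r : I, (if j ≤ r.1 then ff δc (nBlocks r.1) else 0)
      = ∑ r ∈ Finset.univ.filter (fun r : I => j ≤ r.1), ff δc (nBlocks r.1) := by
        rw [Finset.sum_filter]
    _ = ∑ r : {r : I // j ≤ r.1}, ff δc (nBlocks r.1.1) := by
        rw [Finset.sum_subtype (p := fun r : I => j ≤ r.1)
          (Finset.univ.filter (fun r : I => j ≤ r.1))
          (fun x => by simp) (fun r : I => ff δc (nBlocks r.1))]
    _ = ∑ u : Setoid (Quotient j), ff δc (nBlocks u) := by
        refine Fintype.sum_equiv e _ _ fun r => ?_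
        show ff δc (nBlocks r.1.1) = ff δc (nBlocks (e r))
        have he : e r = (Setoid.correspondence j) (e1 r) := rfl
        rw [he, nBlocks_correspondence j (e1 r)]
        rfl
    _ = δc ^ Fintype.card (Quotient j) := stirling _ δc
    _ = δc ^ nBlocks j := by rw [nBlocks, Nat.card_eq_fintype_card]

lemma gram2_eval_factorization (δc : ℂ) :
    (Gram2 m).map (Polynomial.eval δc) =
      zetaM m * Matrix.diagonal (fun p : I => ff δc (nBlocks p.1)) * (zetaM m).transpose := by
  ext p q
  rw [Matrix.map_apply, Matrix.mul_apply]
  have lhs : Polynomial.eval δc (Gram2 m p q) = δc ^ nBlocks (p.1 ⊔ q.1) := by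
    simp [Gram2]
  rw [lhs, ← sum_ff_coarsenings m δc (p.1 ⊔ q.1) (even_of_le le_sup_left p.2)]
  refine Finset.sum_congr rfl fun r _ => ?_
  rw [Matrix.mul_diagonal, Matrix.transpose_apply]
  show (if p.1 ⊔ q.1 ≤ r.1 then ff δc (nBlocks r.1) else 0) =
      (if p.1 ≤ r.1 then (1:ℂ) else 0) * ff δc (nBlocks r.1) *
      (if q.1 ≤ r.1 then (1:ℂ) else 0)
  by_cases h1 : p.1 ≤ r.1 <;> by_cases h2 : q.1 ≤ r.1 <;>
    simp [sup_le_iff, h1, h2]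

lemma zetaM_det : (zetaM m).det = 1 := by
  have hbt : (zetaM m).BlockTriangular (fun p : I => OrderDual.toDual (nBlocks p.1)) := by
    intro i j hlt
    have hlt' : nBlocks i.1 < nBlocks j.1 := hlt
    show (if i.1 ≤ j.1 then (1:ℂ) else 0) = 0
    rw [if_neg]
    intro hle
    exact absurd (nBlocks_antitone hle) (not_le.2 hlt')
  rw [hbt.det]
  apply Finset.prod_eq_one
  intro a _
  have : (zetaM m).toSquareBlock (fun p : I => OrderDual.toDual (nBlocks p.1)) a = 1 := by
    ext i j
    rw [Matrix.toSquareBlock_def]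
    by_cases h : i = j
    · subst h
      rw [Matrix.one_apply_eq]
      show (if i.1.1 ≤ i.1.1 then (1:ℂ) else 0) = 1
      rw [if_pos le_rfl]
    · rw [Matrix.one_apply_ne h]
      show (if i.1.1 ≤ j.1.1 then (1:ℂ) else 0) = 0
      rw [if_neg]
      intro hle
      apply h
      have hnb : nBlocks i.1.1 = nBlocks j.1.1 := by
        have hi := i.2
        have hj := j.2
        have : OrderDual.toDual (nBlocks i.1.1) = OrderDual.toDual (nBlocks j.1.1) := by
          rw [hi, hj]
        exact congrArg OrderDual.ofDual this
      exact Subtype.ext (Subtype.ext (congrArg Subtype.val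
        (congrArg Subtype.val (by
          have := eq_of_le_of_nBlocks_eq hle hnb
          exact Subtype.ext (Subtype.ext this)))))
  rw [this, Matrix.det_one]

end Main

theorem gram2_eval_isUnit_iff (m : ℕ) (hm : 1 ≤ m) (δc : ℂ) :
    IsUnit ((Gram2 m).map (Polynomial.eval δc)) ↔ ∀ k : ℕ, k < m → δc ≠ (k : ℂ) := by
  rw [gram2_eval_factorization m δc, Matrix.isUnit_iff_isUnit_det, Matrix.det_mul,
    Matrix.det_mul, zetaM_det, Matrix.det_transpose, zetaM_det, one_mul, mul_one,
    Matrix.det_diagonal, isUnit_iff_ne_zero, Finset.prod_ne_zero_iff]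
  constructor
  · intro H k hk
    have := H ⟨pairSetoid m, isEven_pairSetoid m⟩ (Finset.mem_univ _)
    rw [ff_ne_zero_iff] at this
    apply this
    rw [nBlocks_pairSetoid]
    exact hk
  · intro H p _
    rw [ff_ne_zero_iff]
    intro k hk
    apply H
    have hle : 2 * nBlocks p.1 ≤ Fintype.card (Fin (2 * m)) := two_mul_nBlocks_le p.2
    rw [Fintype.card_fin] at hle
    omega

end
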